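/- Let θ(q,z) = ∑_{j=0}^∞ q^{j(j+1)/2} z^j be the partial theta function. For every complex q with 0 < |q| < 1 and every integer k ≥ 1, if |z| = |q|^{-k-1/2} then the modulus of the k-th term satisfies |q^{k(k+1)/2} z^k| = |q|^{-k²/2}, and the sum of the moduli of all other terms is strictly less than |q|^{-k²/2} · τ(|q|), where τ(x) := 2·∑_{ν=1}^∞ x^{ν²/2}. -/

import Mathlib

open Real Complex

theorem stmt1 (q : ℂ) (hq0 : 0 < ‖q‖) (hq1 : ‖q‖ < 1)
    (k : ℕ) (hk : 1 ≤ k) (z : ℂ)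
    (hz : ‖z‖ = (‖q‖) ^ (-(k : ℝ) - 1 / 2)) :
    ‖q ^ (k * (k + 1) / 2) * z ^ k‖ = (‖q‖) ^ (-((k : ℝ) ^ 2) / 2) ∧
    (∑' j : ℕ, if j = k then 0 else ‖q ^ (j * (j + 1) / 2) * z ^ j‖)
      < (‖q‖) ^ (-((k : ℝ) ^ 2) / 2)
          * (2 * ∑' ν : ℕ, (‖q‖) ^ ((((ν : ℝ) + 1) ^ 2) / 2)) := by
  set x := ‖q‖ with hxdef
  have hx0 : 0 < x := hq0
  have hx1 : x < 1 := hq1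
  -- formula for the modulus of each term
  have hterm : ∀ j : ℕ, ‖q ^ (j * (j + 1) / 2) * z ^ j‖
      = x ^ (-((k : ℝ) ^ 2) / 2) * x ^ ((((j : ℝ) - k) ^ 2) / 2) := by
    intro j
    have hcast : ((j * (j + 1) / 2 : ℕ) : ℝ) = (j : ℝ) * ((j : ℝ) + 1) / 2 := by
      rw [Nat.cast_div (Nat.even_mul_succ_self j).two_dvd (by norm_num)]
      push_cast; ring
    rw [norm_mul, norm_pow, norm_pow, hz, ← hxdef]
    rw [← Real.rpow_natCast x (j * (j + 1) / 2), hcast,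
        ← Real.rpow_natCast (x ^ (-(k : ℝ) - 1 / 2)) j,
        ← Real.rpow_mul hx0.le, ← Real.rpow_add hx0, ← Real.rpow_add hx0]
    congr 1
    ring
  have hmain : ‖q ^ (k * (k + 1) / 2) * z ^ k‖ = x ^ (-((k : ℝ) ^ 2) / 2) := by
    rw [hterm k]
    simp
  refine ⟨hmain, ?_⟩
  -- summability of the comparison series
  have hS : Summable (fun ν : ℕ => x ^ ((((ν : ℝ) + 1) ^ 2) / 2)) := by
    refine Summable.of_nonneg_of_le (fun n => (Real.rpow_pos_of_pos hx0 _).le) (fun n => ?_)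
      (summable_geometric_of_lt_one (Real.rpow_nonneg hx0.le (1 / 2))
        (Real.rpow_lt_one hx0.le hx1 (by norm_num)))
    have : (x ^ ((1 : ℝ) / 2)) ^ n = x ^ ((1 : ℝ) / 2 * n) := by
      rw [← Real.rpow_natCast (x ^ ((1 : ℝ) / 2)) n, ← Real.rpow_mul hx0.le]
    rw [this]
    apply Real.rpow_le_rpow_of_exponent_ge hx0 hx1.le
    have hn : (0 : ℝ) ≤ (n : ℝ) := Nat.cast_nonneg n
    nlinarith
  set g : ℕ → ℝ := fun j => if j = k then 0 else x ^ ((((j : ℝ) - k) ^ 2) / 2) with hgdef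
  have hgshift : (fun n : ℕ => g (n + (k + 1))) = fun ν : ℕ => x ^ ((((ν : ℝ) + 1) ^ 2) / 2) := by
    funext n
    have hne : n + (k + 1) ≠ k := by omega
    simp only [hgdef, hne, if_false]
    congr 2
    push_cast; ring
  have hgsum : Summable g := by
    rw [← summable_nat_add_iff (k + 1), hgshift]
    exact hS
  have hgnonneg : ∀ j, 0 ≤ g j := by
    intro j
    by_cases h : j = k <;> simp [hgdef, h, (Real.rpow_pos_of_pos hx0 _).le]
  -- rewrite the LHS tsum
  have hfun : (fun j : ℕ => if j = k then 0 else ‖q ^ (j * (j + 1) / 2) * z ^ j‖)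
      = fun j => x ^ (-((k : ℝ) ^ 2) / 2) * g j := by
    funext j
    by_cases h : j = k <;> simp [hgdef, h, ← hterm j]
  rw [hfun, tsum_mul_left]
  have hc : 0 < x ^ (-((k : ℝ) ^ 2) / 2) := Real.rpow_pos_of_pos hx0 _
  refine mul_lt_mul_of_pos_left ?_ hc
  -- split tsum g
  have hsplit : ∑' j, g j = ∑ i ∈ Finset.range (k + 1), g i + ∑' n, g (n + (k + 1)) :=
    (Summable.sum_add_tsum_nat_add (k + 1) hgsum).symm
  set S := ∑' ν : ℕ, x ^ ((((ν : ℝ) + 1) ^ 2) / 2) with hSdef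
  have htail : ∑' n, g (n + (k + 1)) = S := by rw [hgshift]
  -- the finite head: reindex and compare with S
  have hhead : ∑ i ∈ Finset.range (k + 1), g i
      = ∑ ν ∈ Finset.range k, x ^ ((((ν : ℝ) + 1) ^ 2) / 2) := by
    rw [Finset.sum_range_succ]
    have hgk : g k = 0 := by simp [hgdef]
    rw [hgk, add_zero, ← Finset.sum_range_reflect]
    apply Finset.sum_congr rfl
    intro ν hν
    rw [Finset.mem_range] at hν
    have hne : k - 1 - ν ≠ k := by omega
    have hcast : ((k - 1 - ν : ℕ) : ℝ) = (k : ℝ) - 1 - ν := by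
      have : k - 1 - ν = k - (1 + ν) := by omega
      rw [this, Nat.cast_sub (by omega)]
      push_cast; ring
    simp only [hgdef, hne, if_false]
    congr 1
    rw [hcast]
    ring
  have hheadlt : ∑ i ∈ Finset.range (k + 1), g i < S := by
    rw [hhead]
    have h1 : ∑ ν ∈ Finset.range (k + 1), x ^ ((((ν : ℝ) + 1) ^ 2) / 2) ≤ S :=
      Summable.sum_le_tsum _ (fun i _ => (Real.rpow_pos_of_pos hx0 _).le) hS
    rw [Finset.sum_range_succ] at h1
    have h2 : 0 < x ^ ((((k : ℝ) + 1) ^ 2) / 2) := Real.rpow_pos_of_pos hx0 _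
    linarith
  rw [hsplit, htail]
  linarith
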